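/- Let A be a ring of rank n with a unital basis β (a ℤ-basis with first element 1). Then disc(A) ≡ dpf(B(A,β))² (mod 4), where B(A,β) is the Gram matrix of the trace pairing in the basis β and dpf denotes the discriminant pfaffian. -/

import Mathlib

open Matrix

/-- The Gram matrix of a ring of rank `n` with respect to a ℤ-basis `b`:
its `(i,j)` entry is the trace of the matrix of left multiplication by `b i * b j`. -/
noncomputable def gramMatrix {n : ℕ} {A : Type} [Ring A] (b : Module.Basis (Fin n) ℤ A) :
    Matrix (Fin n) (Fin n) ℤ :=
  Matrix.of fun i j => (Algebra.leftMulMatrix b (b i * b j)).trace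

/-- The discriminant of a ring of rank `n` with respect to a ℤ-basis `b`. -/
noncomputable def disc {n : ℕ} {A : Type} [Ring A] (b : Module.Basis (Fin n) ℤ A) : ℤ :=
  (gramMatrix b).det

/-- The discriminant pfaffian of a matrix `B ∈ Mₙ(ℤ)`.  Pairs `(J, P)` of an
even-cardinality subset `J ⊆ {2,…,n}` together with a perfect matching `P` on `J`
correspond bijectively to involutions `σ` of `{1,…,n}` fixing `1` (namely, the
2-cycles of `σ` are the blocks of `P` and `σ` fixes everything outside `J`).  The
associated term `(∏_{{i,j} ∈ P} b_{ij})·(∏_{k ∈ {2,…,n}∖J} b_{1k})` is the product,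
over non-first indices `i`, of `b_{1i}` if `σ` fixes `i`, of `b_{i,σ(i)}` if `i < σ(i)`,
and of `1` if `σ(i) < i`. -/
def dpf (n : ℕ) [NeZero n] (B : Matrix (Fin n) (Fin n) ℤ) : ℤ :=
  ∑ σ ∈ Finset.univ.filter (fun σ : Equiv.Perm (Fin n) => σ * σ = 1 ∧ σ 0 = 0),
    ∏ i ∈ Finset.univ.filter (fun i : Fin n => i ≠ 0),
      if σ i = i then B 0 i else if i < σ i then B i (σ i) else 1

theorem Equiv.Perm.apply_inv_self {α : Type*} (f : Equiv.Perm α) (x : α) : f (f⁻¹ x) = x :=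
  f.apply_symm_apply x

theorem Equiv.Perm.inv_apply_self {α : Type*} (f : Equiv.Perm α) (x : α) : f⁻¹ (f x) = x :=
  f.symm_apply_apply x

def E4 (x : ZMod 4) : Prop := x = 0 ∨ x = 2
instance : DecidablePred E4 := fun _ => inferInstanceAs (Decidable (_ ∨ _))

lemma E4.mul_eq_zero {x y : ZMod 4} (hx : E4 x) (hy : E4 y) : x * y = 0 := by revert x y; decide
lemma E4.intCast {x : ℤ} (h : 2 ∣ x) : E4 (x : ZMod 4) := by
  obtain ⟨y, rfl⟩ := h
  have h2 : ((2*y : ℤ) : ZMod 4) = 2 * (y : ZMod 4) := by push_cast; ring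
  rw [h2]; generalize (y : ZMod 4) = z; revert z; decide

def border {ι : Type} (r : ι → ZMod 4) (C : Matrix ι ι (ZMod 4)) :
    Matrix (Unit ⊕ ι) (Unit ⊕ ι) (ZMod 4) :=
  Matrix.fromBlocks 0 (Matrix.replicateRow Unit r) (Matrix.replicateCol Unit r) C

def Q {ι : Type} [Fintype ι] [DecidableEq ι] (C : Matrix ι ι (ZMod 4)) (r : ι → ZMod 4) : ZMod 4 :=
  (border r C).det

lemma Q_eq_zero_of_even {ι : Type} [Fintype ι] [DecidableEq ι] (C : Matrix ι ι (ZMod 4))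
    (r : ι → ZMod 4) (hr : ∀ i, E4 (r i)) : Q C r = 0 := by
  classical
  rw [Q, Matrix.det_apply]
  refine Finset.sum_eq_zero fun σ _ => ?_
  set M := border r C with hM
  rcases eq_or_ne (σ (Sum.inl ())) (Sum.inl ()) with h | h
  · have : ∏ i, M (σ i) i = 0 := by
      refine Finset.prod_eq_zero (Finset.mem_univ (Sum.inl ())) ?_
      rw [h]; rfl
    rw [this, smul_zero]
  · -- two even factors
    obtain ⟨x, hx⟩ : ∃ x, σ (Sum.inl ()) = Sum.inr x := by
      cases hσ : σ (Sum.inl ()) with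
      | inl u => exact absurd (by cases u; exact hσ) h
      | inr x => exact ⟨x, rfl⟩
    have h0 : σ⁻¹ (Sum.inl ()) ≠ Sum.inl () := by
      intro hc
      apply h
      have := congrArg σ hc
      rw [Equiv.Perm.apply_inv_self] at this
      exact this.symm
    obtain ⟨y, hy⟩ : ∃ y, σ⁻¹ (Sum.inl ()) = Sum.inr y := by
      cases hσ : σ⁻¹ (Sum.inl ()) with
      | inl u => exact absurd (by cases u; exact hσ) h0
      | inr x => exact ⟨x, rfl⟩
    have hmem : (Sum.inr y : Unit ⊕ ι) ∈ Finset.univ.erase (Sum.inl ()) := by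
      simp
    have hsplit : ∏ i, M (σ i) i
        = M (σ (Sum.inl ())) (Sum.inl ()) * (M (σ (Sum.inr y)) (Sum.inr y) *
            ∏ i ∈ (Finset.univ.erase (Sum.inl ())).erase (Sum.inr y), M (σ i) i) := by
      rw [Finset.mul_prod_erase _ (fun i => M (σ i) i) hmem,
        Finset.mul_prod_erase _ (fun i => M (σ i) i) (Finset.mem_univ (Sum.inl ()))]
    have h1 : M (σ (Sum.inl ())) (Sum.inl ()) = r x := by rw [hx]; rfl
    have h2 : M (σ (Sum.inr y)) (Sum.inr y) = r y := by
      have : σ (Sum.inr y) = Sum.inl () := by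
        rw [← hy, Equiv.Perm.apply_inv_self]
      rw [this]; rfl
    rw [hsplit, h1, h2, ← mul_assoc, E4.mul_eq_zero (hr x) (hr y), zero_mul, smul_zero]

lemma border_submatrix {ι κ : Type} (e : κ ≃ ι) (C : Matrix ι ι (ZMod 4)) (r : ι → ZMod 4) :
    border (fun k => r (e k)) (C.submatrix e e)
      = (border r C).submatrix (Equiv.sumCongr (Equiv.refl Unit) e) (Equiv.sumCongr (Equiv.refl Unit) e) := by
  ext i j
  rcases i with u | i <;> rcases j with v | j <;> rfl

lemma Q_reindex {ι κ : Type} [Fintype ι] [DecidableEq ι] [Fintype κ] [DecidableEq κ]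
    (e : κ ≃ ι) (C : Matrix ι ι (ZMod 4)) (r : ι → ZMod 4) :
    Q (C.submatrix e e) (fun k => r (e k)) = Q C r := by
  rw [Q, Q, border_submatrix, Matrix.det_submatrix_equiv_self]

lemma Q_congruence {ι : Type} [Fintype ι] [DecidableEq ι]
    (U C : Matrix ι ι (ZMod 4)) (hU : U.det = 1) (r : ι → ZMod 4) :
    Q (Uᵀ * C * U) (Uᵀ.mulVec r) = Q C r := by
  classical
  have h12 : Matrix.replicateRow Unit (Uᵀ.mulVec r) = Matrix.replicateRow Unit r * U := by
    ext i j
    simp [Matrix.mul_apply, Matrix.mulVec, Matrix.replicateRow_apply, dotProduct, mul_comm]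
  have h21 : Matrix.replicateCol Unit (Uᵀ.mulVec r) = Uᵀ * Matrix.replicateCol Unit r := by
    ext i j
    simp [Matrix.mul_apply, Matrix.mulVec, Matrix.replicateCol_apply, dotProduct]
  have key : border (Uᵀ.mulVec r) (Uᵀ * C * U)
      = (Matrix.fromBlocks (1 : Matrix Unit Unit (ZMod 4)) 0 0 U)ᵀ * border r C
        * Matrix.fromBlocks (1 : Matrix Unit Unit (ZMod 4)) 0 0 U := by
    rw [border, border, Matrix.fromBlocks_transpose, Matrix.transpose_zero, Matrix.transpose_one,
      Matrix.fromBlocks_multiply, Matrix.fromBlocks_multiply]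
    simp only [Matrix.mul_zero, Matrix.zero_mul, add_zero, zero_add, Matrix.transpose_zero,
      Matrix.add_mul, Matrix.mul_one, Matrix.one_mul, h12, h21, Matrix.mul_assoc]
  rw [Q, Q, key, Matrix.det_mul, Matrix.det_mul, Matrix.det_transpose,
    Matrix.det_fromBlocks_zero₂₁, Matrix.det_one, one_mul, hU, mul_one, one_mul]

lemma det_border_top {ι : Type} [Fintype ι] [DecidableEq ι] (a : ZMod 4)
    (C : Matrix ι ι (ZMod 4)) (r : ι → ZMod 4) :
    (Matrix.fromBlocks (Matrix.of fun _ _ => a) (Matrix.replicateRow Unit r) (Matrix.replicateCol Unit r) C).det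
      = a * C.det + Q C r := by
  classical
  set X := Matrix.fromBlocks (Matrix.of fun _ _ => a) (Matrix.replicateRow Unit r) (Matrix.replicateCol Unit r) C
  have hX : X = (border r C).updateRow (Sum.inl ())
      (Pi.single (Sum.inl ()) a + border r C (Sum.inl ())) := by
    ext i j
    rcases i with u | i
    · cases u
      rw [Matrix.updateRow_self]
      rcases j with v | j
      · cases v; simp [X, border]
      · simp [X, border, Pi.single_eq_of_ne]
    · rw [Matrix.updateRow_ne (by simp)]
      rcases j with v | j <;> rfl
  have h1 : (border r C).updateRow (Sum.inl ()) (Pi.single (Sum.inl ()) a)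
      = Matrix.fromBlocks (Matrix.of fun _ _ => a) 0 (Matrix.replicateCol Unit r) C := by
    ext i j
    rcases i with u | i
    · cases u
      rw [Matrix.updateRow_self]
      rcases j with v | j
      · cases v; simp
      · simp [Pi.single_eq_of_ne]
    · rw [Matrix.updateRow_ne (by simp)]
      rcases j with v | j <;> rfl
  have := Matrix.det_updateRow_add (border r C) (Sum.inl ())
      (Pi.single (Sum.inl ()) a) (border r C (Sum.inl ()))
  rw [hX, this, h1, Matrix.updateRow_eq_self, Matrix.det_fromBlocks_zero₁₂, Q]
  congr 1
  rw [Matrix.det_unique]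
  rfl

def eqv₁ (κ ρ : Type) : (Unit ⊕ κ) ⊕ ρ ≃ Unit ⊕ (κ ⊕ ρ) where
  toFun := Sum.elim (Sum.elim Sum.inl (fun k => Sum.inr (Sum.inl k))) (fun m => Sum.inr (Sum.inr m))
  invFun := Sum.elim (fun u => Sum.inl (Sum.inl u)) (Sum.elim (fun k => Sum.inl (Sum.inr k)) Sum.inr)
  left_inv := by rintro ((u | k) | m) <;> rfl
  right_inv := by rintro (u | (k | m)) <;> rfl

def eqv₂ (κ ρ : Type) : (Unit ⊕ ρ) ⊕ κ ≃ Unit ⊕ (κ ⊕ ρ) where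
  toFun := Sum.elim (Sum.elim Sum.inl (fun m => Sum.inr (Sum.inr m))) (fun k => Sum.inr (Sum.inl k))
  invFun := Sum.elim (fun u => Sum.inl (Sum.inl u)) (Sum.elim Sum.inr (fun m => Sum.inl (Sum.inr m)))
  left_inv := by rintro ((u | m) | k) <;> rfl
  right_inv := by rintro (u | (k | m)) <;> rfl

lemma Q_split {κ ρ : Type} [Fintype κ] [DecidableEq κ] [Fintype ρ] [DecidableEq ρ]
    (E : Matrix κ κ (ZMod 4)) (G : Matrix ρ ρ (ZMod 4)) (r : κ ⊕ ρ → ZMod 4) :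
    Q (Matrix.fromBlocks E 0 0 G) r
      = G.det * Q E (fun k => r (Sum.inl k)) + E.det * Q G (fun m => r (Sum.inr m)) := by
  classical
  set M := border r (Matrix.fromBlocks E 0 0 G) with hM
  set v₀ : Unit ⊕ (κ ⊕ ρ) → ZMod 4 :=
    Sum.elim (fun _ => 0) (Sum.elim (fun k => r (Sum.inl k)) (fun _ => 0)) with hv₀
  set v₁ : Unit ⊕ (κ ⊕ ρ) → ZMod 4 :=
    Sum.elim (fun _ => 0) (Sum.elim (fun _ => 0) (fun m => r (Sum.inr m))) with hv₁
  have hrow : M = M.updateRow (Sum.inl ()) (v₀ + v₁) := by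
    rw [show v₀ + v₁ = M (Sum.inl ()) from ?_, Matrix.updateRow_eq_self]
    funext j
    rcases j with u | (k | m) <;> simp [hv₀, hv₁, hM, border]
  have hdet : M.det = (M.updateRow (Sum.inl ()) v₀).det + (M.updateRow (Sum.inl ()) v₁).det := by
    rw [← Matrix.det_updateRow_add, ← hrow]
  have h₀ : (M.updateRow (Sum.inl ()) v₀).submatrix (eqv₁ κ ρ) (eqv₁ κ ρ)
      = Matrix.fromBlocks (border (fun k => r (Sum.inl k)) E) 0
          (Matrix.of fun (m : ρ) (j : Unit ⊕ κ) =>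
            Sum.elim (fun _ => r (Sum.inr m)) (fun _ => (0 : ZMod 4)) j) G := by
    ext i j
    rcases i with (u | k) | m
    · cases u
      rw [Matrix.submatrix_apply]
      erw [Matrix.updateRow_self]
      rcases j with (v | k') | m' <;> rfl
    · rw [Matrix.submatrix_apply]
      erw [Matrix.updateRow_ne (by simp [eqv₁])]
      rcases j with (v | k') | m' <;> rfl
    · rw [Matrix.submatrix_apply]
      erw [Matrix.updateRow_ne (by simp [eqv₁])]
      rcases j with (v | k') | m' <;> rfl
  have h₁ : (M.updateRow (Sum.inl ()) v₁).submatrix (eqv₂ κ ρ) (eqv₂ κ ρ)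
      = Matrix.fromBlocks (border (fun m => r (Sum.inr m)) G) 0
          (Matrix.of fun (k : κ) (j : Unit ⊕ ρ) =>
            Sum.elim (fun _ => r (Sum.inl k)) (fun _ => (0 : ZMod 4)) j) E := by
    ext i j
    rcases i with (u | m) | k
    · cases u
      rw [Matrix.submatrix_apply]
      erw [Matrix.updateRow_self]
      rcases j with (v | m') | k' <;> rfl
    · rw [Matrix.submatrix_apply]
      erw [Matrix.updateRow_ne (by simp [eqv₂])]
      rcases j with (v | m') | k' <;> rfl
    · rw [Matrix.submatrix_apply]
      erw [Matrix.updateRow_ne (by simp [eqv₂])]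
      rcases j with (v | m') | k' <;> rfl
  have d₀ : (M.updateRow (Sum.inl ()) v₀).det = (border (fun k => r (Sum.inl k)) E).det * G.det := by
    rw [← Matrix.det_submatrix_equiv_self (eqv₁ κ ρ), h₀, Matrix.det_fromBlocks_zero₁₂]
  have d₁ : (M.updateRow (Sum.inl ()) v₁).det = (border (fun m => r (Sum.inr m)) G).det * E.det := by
    rw [← Matrix.det_submatrix_equiv_self (eqv₂ κ ρ), h₁, Matrix.det_fromBlocks_zero₁₂]
  rw [Q, ← hM, hdet, d₀, d₁, Q, Q]
  ring

lemma E4.add {x y : ZMod 4} (hx : E4 x) (hy : E4 y) : E4 (x + y) := by revert x y; decide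
lemma E4.of_sub {x y : ZMod 4} (h : E4 (x - y)) (hy : E4 y) : E4 x := by revert x y; decide
lemma E4.sub_comm {x y : ZMod 4} (h : E4 (x - y)) : E4 (y - x) := by revert x y; decide
lemma isUnit_of_not_E4 {x : ZMod 4} (h : ¬ E4 x) : IsUnit x := by
  refine IsUnit.of_mul_eq_one (a := x) x ?_
  revert x; decide

lemma gauss_step {κ ρ : Type} [Fintype κ] [DecidableEq κ] [Fintype ρ] [DecidableEq ρ]
    (C : Matrix (κ ⊕ ρ) (κ ⊕ ρ) (ZMod 4)) (hsym : Cᵀ = C)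
    (hE : IsUnit C.toBlocks₁₁.det) :
    ∃ U : Matrix (κ ⊕ ρ) (κ ⊕ ρ) (ZMod 4), U.det = 1 ∧
      Uᵀ * C * U = Matrix.fromBlocks C.toBlocks₁₁ 0 0
        (C.toBlocks₂₂ - C.toBlocks₂₁ * C.toBlocks₁₁⁻¹ * C.toBlocks₁₂) := by
  classical
  set E := C.toBlocks₁₁
  set F := C.toBlocks₁₂
  set F' := C.toBlocks₂₁
  set G := C.toBlocks₂₂
  have hF' : F' = Fᵀ := by
    ext i j
    have := congrFun (congrFun hsym (Sum.inr i)) (Sum.inl j)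
    exact this.symm
  have hEsym : Eᵀ = E := by
    ext i j
    exact congrFun (congrFun hsym (Sum.inl i)) (Sum.inl j)
  refine ⟨Matrix.fromBlocks 1 (-(E⁻¹ * F)) 0 1, ?_, ?_⟩
  · rw [Matrix.det_fromBlocks_zero₂₁, Matrix.det_one, Matrix.det_one, mul_one]
  · have hC : C = Matrix.fromBlocks E F F' G := (Matrix.fromBlocks_toBlocks C).symm
    rw [hC, Matrix.fromBlocks_transpose, Matrix.transpose_one, Matrix.transpose_one,
      Matrix.transpose_zero, Matrix.fromBlocks_multiply, Matrix.fromBlocks_multiply]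
    have hEinv : E * E⁻¹ = 1 := Matrix.mul_nonsing_inv E hE
    have hinvE : E⁻¹ * E = 1 := Matrix.nonsing_inv_mul E hE
    have hEinvT : E⁻¹ᵀ = E⁻¹ := by rw [Matrix.transpose_nonsing_inv, hEsym]
    have h12 : -(E * (E⁻¹ * F)) + F = 0 := by
      rw [← Matrix.mul_assoc, hEinv, Matrix.one_mul, neg_add_cancel]
    have h21 : -(Fᵀ * E⁻¹ᵀ * E) + F' = 0 := by
      rw [hEinvT, Matrix.mul_assoc, hinvE, Matrix.mul_one, hF', neg_add_cancel]
    simp only [Matrix.one_mul, Matrix.mul_one, Matrix.zero_mul, Matrix.mul_zero,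
      add_zero, zero_add, Matrix.mul_neg, Matrix.neg_mul, Matrix.transpose_neg,
      Matrix.transpose_mul, Matrix.transpose_one, h12, h21, Matrix.zero_mul, neg_zero]
    rw [hF', hEinvT, sub_eq_add_neg, add_comm, Matrix.mul_assoc]

lemma E4_iff (x : ZMod 4) : E4 x ↔ ZMod.castHom (by norm_num : 2 ∣ 4) (ZMod 2) x = 0 := by
  revert x; decide

lemma zmod2_add_self (x : ZMod 2) : x + x = 0 := by revert x; decide
lemma zmod2_sq (x : ZMod 2) : x * x = x := by revert x; decide

lemma double_sum_zmod2 {ι : Type} [Fintype ι] [DecidableEq ι] (f : ι → ι → ZMod 2)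
    (hf : ∀ i j, f i j = f j i) : (∑ i, ∑ j, f i j) = ∑ i, f i i := by
  classical
  rw [← Finset.sum_product Finset.univ Finset.univ (fun p => f p.1 p.2)]
  rw [← Finset.diag_union_offDiag Finset.univ,
    Finset.sum_union (Finset.disjoint_diag_offDiag _), Finset.sum_diag]
  have hzero : ∑ p ∈ Finset.univ.offDiag, f p.1 p.2 = 0 := by
    refine Finset.sum_involution (fun p _ => (p.2, p.1)) ?_ ?_ ?_ ?_
    · intro p _
      rw [hf p.2 p.1, zmod2_add_self]
    · intro p hp _
      have hne := (Finset.mem_offDiag.mp hp).2.2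
      intro hc
      exact hne (congrArg Prod.snd hc)
    · intro p hp
      have h := Finset.mem_offDiag.mp hp
      exact Finset.mem_offDiag.mpr ⟨h.2.1, h.1, fun hc => h.2.2 hc.symm⟩
    · intro p _; rfl
  rw [hzero, add_zero]

lemma charVec {ι : Type} [Fintype ι] [DecidableEq ι] (C : Matrix ι ι (ZMod 4)) (hsym : Cᵀ = C)
    (r : ι → ZMod 4) (hr : ∀ i, E4 (r i - C i i)) (u : ι → ZMod 4) :
    E4 ((∑ k, ∑ l, u k * C k l * u l) - ∑ k, r k * u k) := by
  classical
  set φ := ZMod.castHom (by norm_num : 2 ∣ 4) (ZMod 2) with hφdef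
  rw [E4_iff]
  have hφ : ∀ k, φ (r k) = φ (C k k) := by
    intro k
    have h := (E4_iff _).mp (hr k)
    rw [map_sub] at h
    exact sub_eq_zero.mp h
  have key : (∑ k, ∑ l, φ (u k) * φ (C k l) * φ (u l)) = ∑ k, φ (C k k) * φ (u k) := by
    rw [double_sum_zmod2 (fun k l => φ (u k) * φ (C k l) * φ (u l)) ?_]
    · refine Finset.sum_congr rfl fun k _ => ?_
      rw [mul_comm (φ (u k)) (φ (C k k)), mul_assoc, zmod2_sq]
    · intro i j
      have hc : C i j = C j i := (congrFun (congrFun hsym i) j).symm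
      simp only [hc]; ring
  simp only [map_sub, map_sum, _root_.map_mul]
  rw [key]
  rw [show (∑ k, φ (r k) * φ (u k)) = ∑ k, φ (C k k) * φ (u k) from
    Finset.sum_congr rfl fun k _ => by rw [hφ k]]
  exact sub_self _

def pairEquiv (κ : Type) [Unique κ] : Fin 2 ≃ Unit ⊕ κ where
  toFun := ![Sum.inl (), Sum.inr default]
  invFun := Sum.elim (fun _ => 0) (fun _ => 1)
  left_inv := by intro i; fin_cases i <;> rfl
  right_inv := by
    rintro (u | k)
    · rfl
    · exact congrArg Sum.inr (Unique.eq_default k).symm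

lemma Q_unique {κ : Type} [Unique κ] [Fintype κ] [DecidableEq κ]
    (E : Matrix κ κ (ZMod 4)) (r : κ → ZMod 4) :
    Q E r = -(r default * r default) := by
  classical
  rw [Q, ← Matrix.det_submatrix_equiv_self (pairEquiv κ), Matrix.det_fin_two]
  show (0 : ZMod 4) * E default default - r default * r default = _
  rw [zero_mul, zero_sub]

lemma det_eq_zero_allEven {ι : Type} [Fintype ι] [DecidableEq ι] (C : Matrix ι ι (ZMod 4))
    (h2 : 2 ≤ Fintype.card ι) (hall : ∀ i j, E4 (C i j)) : C.det = 0 := by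
  classical
  obtain ⟨a, b, hab⟩ := Fintype.one_lt_card_iff.mp h2
  rw [Matrix.det_apply]
  refine Finset.sum_eq_zero fun σ _ => ?_
  have hmem : b ∈ Finset.univ.erase a := Finset.mem_erase.mpr ⟨hab.symm, Finset.mem_univ b⟩
  rw [← Finset.mul_prod_erase _ (fun i => C (σ i) i) (Finset.mem_univ a),
    ← Finset.mul_prod_erase _ (fun i => C (σ i) i) hmem, ← mul_assoc,
    E4.mul_eq_zero (hall _ _) (hall _ _), zero_mul, smul_zero]

lemma alg1 : ∀ e d μ : ZMod 4, ¬ E4 e →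
    d * -1 + e * (d ^ 2 - (μ + 1) * d) = (e * d) ^ 2 - (μ + 1 + 1) * (e * d) := by decide
lemma alg2 : ∀ d μ : ZMod 4, d * 0 + 3 * (d ^ 2 - (μ + 1) * d)
    = (3 * d) ^ 2 - (μ + 1 + 1 + 1) * (3 * d) := by decide
lemma alg0 : ∀ d : ZMod 4, E4 d → d ^ 2 - (1 + 1) * d = 0 := by decide
lemma sq_odd : ∀ x e : ZMod 4, ¬ E4 e → E4 (x - e) → x * x = 1 := by decide
lemma detE2 : ∀ a b u : ZMod 4, E4 a → E4 b → ¬ E4 u → a * b - u * u = 3 := by decide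
lemma notE4_three : ¬ E4 (3 : ZMod 4) := by decide

def twoEquiv {ι : Type} [DecidableEq ι] (k l : ι) (hkl : k ≠ l) :
    Fin 2 ≃ {a : ι // a = k ∨ a = l} where
  toFun := ![⟨k, Or.inl rfl⟩, ⟨l, Or.inr rfl⟩]
  invFun := fun a => if a.1 = k then 0 else 1
  left_inv := by
    intro i
    fin_cases i
    · simp
    · simp [hkl.symm]
  right_inv := by
    rintro ⟨a, (rfl | rfl)⟩
    · simp
    · simp [hkl.symm]

set_option maxHeartbeats 2000000 in
lemma main_L : ∀ m : ℕ, ∀ (ι : Type) [Fintype ι] [DecidableEq ι], Fintype.card ι = m →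
    ∀ (C : Matrix ι ι (ZMod 4)), Cᵀ = C → ∀ (r : ι → ZMod 4), (∀ i, E4 (r i - C i i)) →
    Q C r = C.det ^ 2 - ((m : ZMod 4) + 1) * C.det := by
  intro m
  induction m using Nat.strong_induction_on with
  | _ m IH =>
  intro ι _ _ hcard C hsym r hr
  by_cases hdiag : ∃ k, ¬ E4 (C k k)
  · -- 1×1 pivot
    obtain ⟨k, hk⟩ := hdiag
    haveI : Unique {a : ι // a = k} := ⟨⟨⟨k, rfl⟩⟩, fun x => Subtype.ext x.2⟩
    set ε : {a : ι // a = k} ⊕ {a : ι // ¬ a = k} ≃ ι := Equiv.sumCompl (· = k) with hε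
    set C₁ := C.submatrix ε ε with hC₁
    set r₁ : _ → ZMod 4 := fun x => r (ε x) with hr₁def
    have hQ1 : Q C₁ r₁ = Q C r := Q_reindex ε C r
    have hsym₁ : C₁ᵀ = C₁ := by rw [hC₁, Matrix.transpose_submatrix, hsym]
    have hr₁ : ∀ x, E4 (r₁ x - C₁ x x) := fun x => hr (ε x)
    have hd : ((default : {a : ι // a = k}) : ι) = k := (default : {a : ι // a = k}).2
    have hEdd : C₁.toBlocks₁₁ default default = C k k := by
      simp only [hC₁, Matrix.toBlocks₁₁, Matrix.submatrix_apply, Matrix.of_apply, hε]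
      rw [Equiv.sumCompl_apply_inl, hd]
    have hE : IsUnit C₁.toBlocks₁₁.det := by
      rw [Matrix.det_unique, hEdd]
      exact isUnit_of_not_E4 hk
    obtain ⟨U, hUdet, hUeq⟩ := gauss_step C₁ hsym₁ hE
    set E := C₁.toBlocks₁₁ with hEdef
    set G' := C₁.toBlocks₂₂ - C₁.toBlocks₂₁ * C₁.toBlocks₁₁⁻¹ * C₁.toBlocks₁₂ with hG'def
    set C₂ := Uᵀ * C₁ * U with hC₂def
    set r₂ := Uᵀ.mulVec r₁ with hr₂def
    have hQ2 : Q C₂ r₂ = Q C₁ r₁ := Q_congruence U C₁ hUdet r₁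
    have hr₂ : ∀ x, E4 (r₂ x - C₂ x x) := by
      intro x
      have h1 : C₂ x x = ∑ a, ∑ c, U a x * C₁ a c * U c x := by
        rw [hC₂def, Matrix.mul_apply]
        have hinner : ∀ a, (Uᵀ * C₁) x a * U a x = ∑ c, U c x * C₁ c a * U a x := by
          intro a
          rw [Matrix.mul_apply, Finset.sum_mul]
          exact Finset.sum_congr rfl fun c _ => by rw [Matrix.transpose_apply]
        rw [Finset.sum_congr rfl fun a _ => hinner a]
        exact Finset.sum_comm
      have h2 : r₂ x = ∑ a, r₁ a * U a x := by
        rw [hr₂def, Matrix.mulVec, dotProduct]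
        refine Finset.sum_congr rfl fun a _ => ?_
        rw [Matrix.transpose_apply, mul_comm]
      rw [h1, h2]
      exact E4.sub_comm (charVec C₁ hsym₁ r₁ hr₁ (fun a => U a x))
    have hQ3 : Q C₂ r₂ = G'.det * Q E (fun a => r₂ (Sum.inl a))
        + E.det * Q G' (fun a => r₂ (Sum.inr a)) := by
      rw [show C₂ = Matrix.fromBlocks E 0 0 G' from hUeq]
      exact Q_split E G' r₂
    have hx : Q E (fun a => r₂ (Sum.inl a)) = -1 := by
      rw [Q_unique]
      have h := hr₂ (Sum.inl default)
      have hC2dd : C₂ (Sum.inl default) (Sum.inl default) = E default default := by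
        rw [hUeq]; rfl
      rw [hC2dd] at h
      rw [sq_odd _ _ (by rw [hEdd]; exact hk) h]
    have hmpos : m ≠ 0 := by
      have : 0 < Fintype.card ι := Fintype.card_pos_iff.mpr ⟨k⟩
      omega
    obtain ⟨m', hm'⟩ := Nat.exists_eq_succ_of_ne_zero hmpos
    have hcardρ : Fintype.card {a : ι // ¬ a = k} = m' := by
      have h1 : Fintype.card {a : ι // ¬ a = k}
          = Fintype.card ι - Fintype.card {a : ι // a = k} := Fintype.card_subtype_compl _
      rw [hcard, Fintype.card_subtype_eq] at h1
      omega
    have hC₂sym : C₂ᵀ = C₂ := by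
      rw [hC₂def, Matrix.transpose_mul, Matrix.transpose_mul, Matrix.transpose_transpose,
        hsym₁, Matrix.mul_assoc]
    have hsymG : G'ᵀ = G' := by
      have h := hC₂sym
      rw [hUeq, Matrix.fromBlocks_transpose, Matrix.transpose_zero, Matrix.transpose_zero] at h
      have := congrArg Matrix.toBlocks₂₂ h
      rwa [Matrix.toBlocks_fromBlocks₂₂, Matrix.toBlocks_fromBlocks₂₂] at this
    have hrG : ∀ a, E4 ((fun a => r₂ (Sum.inr a)) a - G' a a) := by
      intro a
      have h := hr₂ (Sum.inr a)
      rwa [show C₂ (Sum.inr a) (Sum.inr a) = G' a a from by rw [hUeq]; rfl] at h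
    have hrec := IH m' (by omega) {a : ι // ¬ a = k} hcardρ G' hsymG _ hrG
    have hdetC : C.det = E.det * G'.det := by
      have h1 : C₁.det = C.det := by rw [hC₁]; exact Matrix.det_submatrix_equiv_self ε C
      have h2 : C₂.det = C₁.det := by
        rw [hC₂def, Matrix.det_mul, Matrix.det_mul, Matrix.det_transpose, hUdet, mul_one]
        rw [one_mul]
      have h3 : C₂.det = E.det * G'.det := by
        rw [hUeq, Matrix.det_fromBlocks_zero₁₂]
      rw [← h1, ← h2, h3]
    have hdetE : E.det = C k k := by rw [Matrix.det_unique, hEdd]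
    rw [← hQ1, ← hQ2, hQ3, hx, hrec, hdetC, hm']
    push_cast
    rw [hdetE]
    linear_combination alg1 (C k k) G'.det (m' : ZMod 4) hk
  · push_neg at hdiag
    by_cases hoff : ∃ k l, ¬ E4 (C k l)
    · -- 2×2 pivot
      obtain ⟨k, l, hkl'⟩ := hoff
      have hkl : k ≠ l := by
        rintro rfl
        exact hkl' (hdiag k)
      set ε : {a : ι // a = k ∨ a = l} ⊕ {a : ι // ¬ (a = k ∨ a = l)} ≃ ι :=
        Equiv.sumCompl (fun a => a = k ∨ a = l) with hε
      set C₁ := C.submatrix ε ε with hC₁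
      set r₁ : _ → ZMod 4 := fun x => r (ε x) with hr₁def
      have hQ1 : Q C₁ r₁ = Q C r := Q_reindex ε C r
      have hsym₁ : C₁ᵀ = C₁ := by rw [hC₁, Matrix.transpose_submatrix, hsym]
      have hr₁ : ∀ x, E4 (r₁ x - C₁ x x) := fun x => hr (ε x)
      set E := C₁.toBlocks₁₁ with hEdef
      have hdetE : E.det = 3 := by
        rw [← Matrix.det_submatrix_equiv_self (twoEquiv k l hkl) E, Matrix.det_fin_two]
        have e00 : E.submatrix (twoEquiv k l hkl) (twoEquiv k l hkl) 0 0 = C k k := rfl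
        have e11 : E.submatrix (twoEquiv k l hkl) (twoEquiv k l hkl) 1 1 = C l l := rfl
        have e01 : E.submatrix (twoEquiv k l hkl) (twoEquiv k l hkl) 0 1 = C k l := rfl
        have e10 : E.submatrix (twoEquiv k l hkl) (twoEquiv k l hkl) 1 0 = C l k := rfl
        rw [e00, e11, e01, e10]
        have hlk : C l k = C k l := (congrFun (congrFun hsym l) k).symm
        rw [hlk]
        exact detE2 (C k k) (C l l) (C k l) (hdiag k) (hdiag l) hkl'
      have hE : IsUnit E.det := by
        rw [hdetE]; exact isUnit_of_not_E4 notE4_three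
      obtain ⟨U, hUdet, hUeq⟩ := gauss_step C₁ hsym₁ hE
      set G' := C₁.toBlocks₂₂ - C₁.toBlocks₂₁ * C₁.toBlocks₁₁⁻¹ * C₁.toBlocks₁₂ with hG'def
      set C₂ := Uᵀ * C₁ * U with hC₂def
      set r₂ := Uᵀ.mulVec r₁ with hr₂def
      have hQ2 : Q C₂ r₂ = Q C₁ r₁ := Q_congruence U C₁ hUdet r₁
      have hr₂ : ∀ x, E4 (r₂ x - C₂ x x) := by
        intro x
        have h1 : C₂ x x = ∑ a, ∑ c, U a x * C₁ a c * U c x := by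
          rw [hC₂def, Matrix.mul_apply]
          have hinner : ∀ a, (Uᵀ * C₁) x a * U a x = ∑ c, U c x * C₁ c a * U a x := by
            intro a
            rw [Matrix.mul_apply, Finset.sum_mul]
            exact Finset.sum_congr rfl fun c _ => by rw [Matrix.transpose_apply]
          rw [Finset.sum_congr rfl fun a _ => hinner a]
          exact Finset.sum_comm
        have h2 : r₂ x = ∑ a, r₁ a * U a x := by
          rw [hr₂def, Matrix.mulVec, dotProduct]
          refine Finset.sum_congr rfl fun a _ => ?_
          rw [Matrix.transpose_apply, mul_comm]
        rw [h1, h2]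
        exact E4.sub_comm (charVec C₁ hsym₁ r₁ hr₁ (fun a => U a x))
      have hQ3 : Q C₂ r₂ = G'.det * Q E (fun a => r₂ (Sum.inl a))
          + E.det * Q G' (fun a => r₂ (Sum.inr a)) := by
        rw [show C₂ = Matrix.fromBlocks E 0 0 G' from hUeq]
        exact Q_split E G' r₂
      have hx : Q E (fun a => r₂ (Sum.inl a)) = 0 := by
        refine Q_eq_zero_of_even E _ fun a => ?_
        have h := hr₂ (Sum.inl a)
        have hC2aa : C₂ (Sum.inl a) (Sum.inl a) = C a.1 a.1 := by
          rw [hUeq]; rfl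
        rw [hC2aa] at h
        exact E4.of_sub h (hdiag a.1)
      have hm2 : 2 ≤ m := by
        have : 1 < Fintype.card ι := Fintype.one_lt_card_iff.mpr ⟨k, l, hkl⟩
        omega
      obtain ⟨m', hm'⟩ : ∃ m', m = m' + 2 := ⟨m - 2, by omega⟩
      have hcardκ : Fintype.card {a : ι // a = k ∨ a = l} = 2 := by
        rw [← Fintype.card_congr (twoEquiv k l hkl)]
        simp
      have hcardρ : Fintype.card {a : ι // ¬ (a = k ∨ a = l)} = m' := by
        have h1 := Fintype.card_subtype_compl (fun a : ι => a = k ∨ a = l)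
        rw [hcard, hcardκ] at h1
        omega
      have hC₂sym : C₂ᵀ = C₂ := by
        rw [hC₂def, Matrix.transpose_mul, Matrix.transpose_mul, Matrix.transpose_transpose,
          hsym₁, Matrix.mul_assoc]
      have hsymG : G'ᵀ = G' := by
        have h := hC₂sym
        rw [hUeq, Matrix.fromBlocks_transpose, Matrix.transpose_zero, Matrix.transpose_zero] at h
        have := congrArg Matrix.toBlocks₂₂ h
        rwa [Matrix.toBlocks_fromBlocks₂₂, Matrix.toBlocks_fromBlocks₂₂] at this
      have hrG : ∀ a, E4 ((fun a => r₂ (Sum.inr a)) a - G' a a) := by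
        intro a
        have h := hr₂ (Sum.inr a)
        rwa [show C₂ (Sum.inr a) (Sum.inr a) = G' a a from by rw [hUeq]; rfl] at h
      have hrec := IH m' (by omega) {a : ι // ¬ (a = k ∨ a = l)} hcardρ G' hsymG _ hrG
      have hdetC : C.det = E.det * G'.det := by
        have h1 : C₁.det = C.det := by rw [hC₁]; exact Matrix.det_submatrix_equiv_self ε C
        have h2 : C₂.det = C₁.det := by
          rw [hC₂def, Matrix.det_mul, Matrix.det_mul, Matrix.det_transpose, hUdet, mul_one]
          rw [one_mul]
        have h3 : C₂.det = E.det * G'.det := by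
          rw [hUeq, Matrix.det_fromBlocks_zero₁₂]
        rw [← h1, ← h2, h3]
      rw [← hQ1, ← hQ2, hQ3, hx, hrec, hdetC, hdetE, hm']
      push_cast
      linear_combination alg2 G'.det (m' : ZMod 4)
    · -- everything even
      push_neg at hoff
      have hreven : ∀ i, E4 (r i) := fun i => E4.of_sub (hr i) (hoff i i)
      rw [Q_eq_zero_of_even C r hreven]
      rcases m with _ | m
      · haveI : IsEmpty ι := Fintype.card_eq_zero_iff.mp hcard
        rw [Matrix.det_isEmpty]
        norm_num
      rcases m with _ | m
      · obtain ⟨x, hx⟩ := Fintype.card_eq_one_iff.mp hcard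
        haveI : Unique ι := ⟨⟨x⟩, hx⟩
        rw [Matrix.det_unique, Nat.cast_one]
        exact (alg0 _ (hoff _ _)).symm
      · have hdet : C.det = 0 := det_eq_zero_allEven C (by omega) hoff
        rw [hdet]
        ring

section Mod2

variable {n : ℕ} [NeZero n]

lemma term_eq (D : Matrix (Fin n) (Fin n) (ZMod 2)) (hsym : ∀ i j, D i j = D j i)
    (hdg : ∀ i, D i i = D 0 i) (σ : Equiv.Perm (Fin n))
    (hinv : ∀ x, σ (σ x) = x) (hσ0 : σ 0 = 0) :
    ∏ i ∈ Finset.univ.filter (fun i : Fin n => i ≠ 0),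
        (if σ i = i then D 0 i else if i < σ i then D i (σ i) else 1)
      = ∏ i ∈ Finset.univ.filter (fun i : Fin n => i ≠ 0), D i (σ i) := by
  classical
  set T := Finset.univ.filter (fun i : Fin n => i ≠ 0) with hT
  rw [← Finset.prod_filter_mul_prod_filter_not T (fun i => σ i = i)
    (fun i => if σ i = i then D 0 i else if i < σ i then D i (σ i) else 1)]
  rw [← Finset.prod_filter_mul_prod_filter_not T (fun i => σ i = i) (fun i => D i (σ i))]
  have hA : ∏ i ∈ T.filter (fun i => σ i = i),
      (if σ i = i then D 0 i else if i < σ i then D i (σ i) else 1)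
      = ∏ i ∈ T.filter (fun i => σ i = i), D i (σ i) := by
    refine Finset.prod_congr rfl fun i hi => ?_
    have hfix : σ i = i := (Finset.mem_filter.mp hi).2
    rw [if_pos hfix, hfix, hdg]
  rw [hA]
  congr 1
  set T' := T.filter (fun i => ¬ σ i = i) with hT'
  rw [← Finset.prod_filter_mul_prod_filter_not T' (fun i => i < σ i)
    (fun i => if σ i = i then D 0 i else if i < σ i then D i (σ i) else 1)]
  rw [← Finset.prod_filter_mul_prod_filter_not T' (fun i => i < σ i) (fun i => D i (σ i))]
  have hB1 : ∏ i ∈ T'.filter (fun i => i < σ i),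
      (if σ i = i then D 0 i else if i < σ i then D i (σ i) else 1)
      = ∏ i ∈ T'.filter (fun i => i < σ i), D i (σ i) := by
    refine Finset.prod_congr rfl fun i hi => ?_
    have h1 := Finset.mem_filter.mp hi
    have h2 := Finset.mem_filter.mp h1.1
    rw [if_neg h2.2, if_pos h1.2]
  have hB2 : ∏ i ∈ T'.filter (fun i => ¬ i < σ i),
      (if σ i = i then D 0 i else if i < σ i then D i (σ i) else 1) = 1 := by
    refine Finset.prod_eq_one fun i hi => ?_
    have h1 := Finset.mem_filter.mp hi
    have h2 := Finset.mem_filter.mp h1.1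
    rw [if_neg h2.2, if_neg h1.2]
  have hbij : ∏ i ∈ T'.filter (fun i => ¬ i < σ i), D i (σ i)
      = ∏ i ∈ T'.filter (fun i => i < σ i), D i (σ i) := by
    refine Finset.prod_nbij' (fun i => σ i) (fun i => σ i) ?_ ?_ ?_ ?_ ?_
    · intro a ha
      have h1 := Finset.mem_filter.mp ha
      have h2 := Finset.mem_filter.mp h1.1
      have h3 := Finset.mem_filter.mp h2.1
      have hne : ¬ σ a = a := h2.2
      have ha0 : σ a ≠ 0 := by
        intro hc
        have := congrArg σ hc
        rw [hinv, hσ0] at this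
        exact h3.2 this
      refine Finset.mem_filter.mpr ⟨Finset.mem_filter.mpr ⟨Finset.mem_filter.mpr
        ⟨Finset.mem_univ _, ha0⟩, ?_⟩, ?_⟩
      · rw [hinv]; intro hc; exact hne hc.symm
      · rw [hinv]
        rcases lt_or_ge (σ a) a with h | h
        · exact h
        · exact absurd (lt_of_le_of_ne h (fun hc => hne hc.symm)) h1.2
    · intro a ha
      have h1 := Finset.mem_filter.mp ha
      have h2 := Finset.mem_filter.mp h1.1
      have h3 := Finset.mem_filter.mp h2.1
      have hne : ¬ σ a = a := h2.2
      have ha0 : σ a ≠ 0 := by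
        intro hc
        have := congrArg σ hc
        rw [hinv, hσ0] at this
        exact h3.2 this
      refine Finset.mem_filter.mpr ⟨Finset.mem_filter.mpr ⟨Finset.mem_filter.mpr
        ⟨Finset.mem_univ _, ha0⟩, ?_⟩, ?_⟩
      · rw [hinv]; intro hc; exact hne hc.symm
      · rw [hinv]; exact fun hc => absurd (h1.2.trans hc) (lt_irrefl _)
    · intro a _; exact hinv a
    · intro a _; exact hinv a
    · intro a _
      rw [hinv, hsym]
  rw [hB1, hB2, hbij, mul_one]
  exact (zmod2_sq _).symm

lemma units_smul_zmod2 (u : ℤˣ) (x : ZMod 2) : u • x = x := by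
  rcases Int.units_eq_one_or u with h | h <;> subst h
  · rw [one_smul]
  · show ((-1 : ℤˣ) : ℤ) • x = x
    rw [Units.val_neg, Units.val_one, neg_smul, one_smul]
    revert x; decide

end Mod2

section Dpf2

variable {n : ℕ} [NeZero n]

def permRestrict (σ : Equiv.Perm (Fin n)) (h : σ 0 = 0) :
    Equiv.Perm {a : Fin n // ¬ a = 0} :=
  σ.subtypePerm (by
    intro x
    constructor
    · intro hx hc
      rw [hc, h] at hx
      exact hx rfl
    · intro hx hc
      exact hx (σ.injective (by rw [hc, h])))

lemma dpf_mod2 (B : Matrix (Fin n) (Fin n) ℤ)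
    (hsym : ∀ i j, B i j = B j i) (hd : ∀ i, (2:ℤ) ∣ (B i i - B 0 i)) :
    ((dpf n B : ℤ) : ZMod 2)
      = (((B.submatrix (fun i : {a : Fin n // ¬ a = 0} => i.1) (fun i => i.1)).det : ℤ)
          : ZMod 2) := by
  classical
  set D := B.map (fun x : ℤ => (x : ZMod 2)) with hD
  have hDsym : ∀ i j, D i j = D j i := fun i j => by
    simp only [hD, Matrix.map_apply]; rw [hsym i j]
  have hDdg : ∀ i, D i i = D 0 i := by
    intro i
    have h : ((B i i - B 0 i : ℤ) : ZMod 2) = 0 :=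
      (ZMod.intCast_zmod_eq_zero_iff_dvd _ 2).mpr (by exact_mod_cast hd i)
    rw [Int.cast_sub] at h
    have h2 := sub_eq_zero.mp h
    simpa only [hD, Matrix.map_apply] using h2
  have hcast : ((dpf n B : ℤ) : ZMod 2)
      = ∑ σ ∈ Finset.univ.filter (fun σ : Equiv.Perm (Fin n) => σ * σ = 1 ∧ σ 0 = 0),
          ∏ i ∈ Finset.univ.filter (fun i : Fin n => i ≠ 0),
            (if σ i = i then D 0 i else if i < σ i then D i (σ i) else 1) := by
    rw [dpf, Int.cast_sum]
    refine Finset.sum_congr rfl fun σ _ => ?_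
    rw [Int.cast_prod]
    refine Finset.prod_congr rfl fun i _ => ?_
    split_ifs <;> simp [hD, Matrix.map_apply]
  rw [hcast]
  have hterm : ∀ σ ∈ Finset.univ.filter (fun σ : Equiv.Perm (Fin n) => σ * σ = 1 ∧ σ 0 = 0),
      (∏ i ∈ Finset.univ.filter (fun i : Fin n => i ≠ 0),
        (if σ i = i then D 0 i else if i < σ i then D i (σ i) else 1))
      = ∏ i ∈ Finset.univ.filter (fun i : Fin n => i ≠ 0), D i (σ i) := by
    intro σ hσ
    obtain ⟨h2, h0⟩ := (Finset.mem_filter.mp hσ).2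
    exact term_eq D hDsym hDdg σ
      (fun x => by rw [← Equiv.Perm.mul_apply, h2, Equiv.Perm.one_apply]) h0
  rw [Finset.sum_congr rfl hterm]
  have hfilter : (Finset.univ.filter (fun σ : Equiv.Perm (Fin n) => σ 0 = 0)).filter
      (fun σ => σ * σ = 1)
      = Finset.univ.filter (fun σ : Equiv.Perm (Fin n) => σ * σ = 1 ∧ σ 0 = 0) := by
    ext σ
    simp only [Finset.mem_filter, Finset.mem_univ, true_and]
    tauto
  have hzero : ∑ σ ∈ (Finset.univ.filter (fun σ : Equiv.Perm (Fin n) => σ 0 = 0)).filter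
      (fun σ => ¬ σ * σ = 1),
      ∏ i ∈ Finset.univ.filter (fun i : Fin n => i ≠ 0), D i (σ i) = 0 := by
    refine Finset.sum_involution (fun σ _ => σ⁻¹) ?_ ?_ ?_ ?_
    · intro σ hσ
      have h0 : σ 0 = 0 := (Finset.mem_filter.mp (Finset.mem_filter.mp hσ).1).2
      have h0' : σ⁻¹ (0 : Fin n) = 0 := by
        apply σ.injective
        rw [Equiv.Perm.apply_inv_self, h0]
      have heq : ∏ i ∈ Finset.univ.filter (fun i : Fin n => i ≠ 0), D i (σ⁻¹ i)
          = ∏ i ∈ Finset.univ.filter (fun i : Fin n => i ≠ 0), D i (σ i) := by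
        refine Finset.prod_nbij' (fun i => σ⁻¹ i) (fun i => σ i) ?_ ?_ ?_ ?_ ?_
        · intro a ha
          refine Finset.mem_filter.mpr ⟨Finset.mem_univ _, fun hc => ?_⟩
          have hh := congrArg σ hc
          rw [Equiv.Perm.apply_inv_self, h0] at hh
          exact (Finset.mem_filter.mp ha).2 hh
        · intro a ha
          refine Finset.mem_filter.mpr ⟨Finset.mem_univ _, fun hc => ?_⟩
          have hh := congrArg (fun y => σ⁻¹ y) hc
          simp only [Equiv.Perm.inv_apply_self] at hh
          rw [h0'] at hh
          exact (Finset.mem_filter.mp ha).2 hh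
        · intro a _; exact Equiv.Perm.apply_inv_self σ a
        · intro a _; exact Equiv.Perm.inv_apply_self σ a
        · intro a _
          rw [Equiv.Perm.apply_inv_self, hDsym]
      show (∏ i ∈ Finset.univ.filter (fun i : Fin n => i ≠ 0), D i (σ i))
          + (∏ i ∈ Finset.univ.filter (fun i : Fin n => i ≠ 0), D i (σ⁻¹ i)) = 0
      rw [heq, zmod2_add_self]
    · intro σ hσ _
      have hni : ¬ σ * σ = 1 := (Finset.mem_filter.mp hσ).2
      intro hc
      have hc' : σ⁻¹ = σ := hc
      apply hni
      nth_rewrite 2 [← hc']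
      exact mul_inv_cancel σ
    · intro σ hσ
      have h1 := Finset.mem_filter.mp hσ
      have h0 : σ 0 = 0 := (Finset.mem_filter.mp h1.1).2
      refine Finset.mem_filter.mpr ⟨Finset.mem_filter.mpr ⟨Finset.mem_univ _, ?_⟩, ?_⟩
      · show σ⁻¹ (0 : Fin n) = 0
        apply σ.injective
        rw [Equiv.Perm.apply_inv_self, h0]
      · intro hc
        apply h1.2
        have hc' : σ⁻¹ * σ⁻¹ = 1 := hc
        have hh := congrArg (fun τ : Equiv.Perm (Fin n) => τ⁻¹) hc'
        simp only [_root_.mul_inv_rev, inv_inv, inv_one] at hh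
        exact hh
    · intro σ _; exact inv_inv σ
  have hext : ∑ σ ∈ Finset.univ.filter (fun σ : Equiv.Perm (Fin n) => σ * σ = 1 ∧ σ 0 = 0),
      ∏ i ∈ Finset.univ.filter (fun i : Fin n => i ≠ 0), D i (σ i)
      = ∑ σ ∈ Finset.univ.filter (fun σ : Equiv.Perm (Fin n) => σ 0 = 0),
      ∏ i ∈ Finset.univ.filter (fun i : Fin n => i ≠ 0), D i (σ i) := by
    rw [← Finset.sum_filter_add_sum_filter_not
      (Finset.univ.filter (fun σ : Equiv.Perm (Fin n) => σ 0 = 0)) (fun σ => σ * σ = 1)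
      (fun σ => ∏ i ∈ Finset.univ.filter (fun i : Fin n => i ≠ 0), D i (σ i)),
      hfilter, hzero, add_zero]
  rw [hext]
  have hdetD : (((B.submatrix (fun i : {a : Fin n // ¬ a = 0} => i.1) (fun i => i.1)).det : ℤ)
      : ZMod 2)
      = ∑ π : Equiv.Perm {a : Fin n // ¬ a = 0}, ∏ x : {a : Fin n // ¬ a = 0},
          D x.1 (π x).1 := by
    have hmap : (((B.submatrix (fun i : {a : Fin n // ¬ a = 0} => i.1) (fun i => i.1)).det : ℤ)
        : ZMod 2)
        = (D.submatrix (fun i : {a : Fin n // ¬ a = 0} => i.1) (fun i => i.1)).det := by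
      show (Int.castRingHom (ZMod 2))
        (B.submatrix (fun i : {a : Fin n // ¬ a = 0} => i.1) (fun i => i.1)).det = _
      rw [RingHom.map_det]
      rfl
    rw [hmap, Matrix.det_apply]
    refine Finset.sum_congr rfl fun π _ => ?_
    rw [units_smul_zmod2]
    refine Finset.prod_congr rfl fun x _ => ?_
    rw [Matrix.submatrix_apply, hDsym]
  rw [hdetD]
  refine Finset.sum_nbij' (fun σ => if h : σ 0 = 0 then permRestrict σ h else 1)
    (fun π => Equiv.Perm.ofSubtype π) ?_ ?_ ?_ ?_ ?_
  · intro σ _; exact Finset.mem_univ _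
  · intro π _
    refine Finset.mem_filter.mpr ⟨Finset.mem_univ _, ?_⟩
    exact Equiv.Perm.ofSubtype_apply_of_not_mem π (by simp)
  · -- j (i a) = a : ofSubtype (restrict σ) = σ
    intro σ hσ
    have h0 : σ 0 = 0 := (Finset.mem_filter.mp hσ).2
    show Equiv.Perm.ofSubtype (if h : σ 0 = 0 then permRestrict σ h else 1) = σ
    rw [dif_pos h0]
    ext x
    by_cases hx : x = (0 : Fin n)
    · subst hx
      rw [Equiv.Perm.ofSubtype_apply_of_not_mem _ (by simp), h0]
    · rw [Equiv.Perm.ofSubtype_apply_of_mem (p := fun a : Fin n => ¬ a = 0) _ hx]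
      rfl
  · -- i (j a) = a
    intro π _
    have h0 : Equiv.Perm.ofSubtype π 0 = 0 :=
      Equiv.Perm.ofSubtype_apply_of_not_mem π (by simp)
    show (if h : Equiv.Perm.ofSubtype π 0 = 0
        then permRestrict (Equiv.Perm.ofSubtype π) h else 1) = π
    rw [dif_pos h0]
    refine Equiv.ext fun x => ?_
    exact Subtype.ext
      (Equiv.Perm.ofSubtype_apply_of_mem (p := fun a : Fin n => ¬ a = 0) π x.2)
  · -- value match
    intro σ hσ
    have h0 : σ 0 = 0 := (Finset.mem_filter.mp hσ).2
    show _ = ∏ x : {a : Fin n // ¬ a = 0},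
      D x.1 (((if h : σ 0 = 0 then permRestrict σ h else 1) : Equiv.Perm _) x).1
    rw [dif_pos h0]
    rw [Finset.prod_subtype (Finset.univ.filter (fun i : Fin n => i ≠ 0))
      (p := fun a : Fin n => ¬ a = 0) (by intro x; simp) (fun i => D i (σ i))]
    rfl

end Dpf2

lemma trace_sq_mod2 {n : ℕ} (M : Matrix (Fin n) (Fin n) ℤ) :
    (2:ℤ) ∣ (M * M).trace - M.trace := by
  have : (((M * M).trace - M.trace : ℤ) : ZMod 2) = 0 := by
    rw [Int.cast_sub]
    have htr : ∀ N : Matrix (Fin n) (Fin n) ℤ, ((N.trace : ℤ) : ZMod 2) = ∑ i, (N i i : ZMod 2) := by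
      intro N
      rw [Matrix.trace]
      push_cast
      rfl
    rw [htr, htr]
    have hmm : ∀ i : Fin n, (((M * M) i i : ℤ) : ZMod 2) = ∑ j, (M i j : ZMod 2) * (M j i : ZMod 2) := by
      intro i
      rw [Matrix.mul_apply]
      push_cast
      rfl
    rw [Finset.sum_congr rfl fun i _ => hmm i]
    rw [double_sum_zmod2 (fun i j => (M i j : ZMod 2) * (M j i : ZMod 2))
      (fun i j => mul_comm _ _)]
    rw [Finset.sum_congr rfl fun i _ => zmod2_sq ((M i i : ZMod 2))]
    exact sub_self _
  have h2 := (ZMod.intCast_zmod_eq_zero_iff_dvd _ 2).mp this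
  exact_mod_cast h2

def zeroEquiv (n : ℕ) [NeZero n] : Unit ⊕ {a : Fin n // ¬ a = 0} ≃ Fin n where
  toFun := Sum.elim (fun _ => 0) Subtype.val
  invFun := fun x => if h : x = 0 then Sum.inl () else Sum.inr ⟨x, h⟩
  left_inv := by
    rintro (u | x)
    · cases u; simp
    · simp [x.2]
  right_inv := by
    intro x
    by_cases h : x = 0
    · subst h; simp
    · simp [h]

lemma sq_modEq {a b : ℤ} (h : a ≡ b [ZMOD 2]) : a ^ 2 ≡ b ^ 2 [ZMOD 4] := by
  have hd : (2:ℤ) ∣ b - a := Int.ModEq.dvd h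
  obtain ⟨c, hc⟩ := hd
  have hb : b = a + 2 * c := by linarith
  have h4 : b ^ 2 - a ^ 2 = 4 * (a * c + c ^ 2) := by rw [hb]; ring
  exact Int.modEq_iff_dvd.mpr ⟨a * c + c ^ 2, h4⟩

/-- If `A` is a ring of rank `n` with a unital ℤ-basis `b` (i.e. `b 0 = 1`), then
`disc(A) ≡ dpf(B(A,b))² (mod 4)`, where `B(A,b)` is the Gram matrix of the trace
pairing in the basis `b`. -/
theorem disc_modEq_dpf_sq (n : ℕ) [NeZero n] (A : Type) [Ring A]
    (b : Module.Basis (Fin n) ℤ A) (hb : b 0 = 1) :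
    disc b ≡ (dpf n (gramMatrix b)) ^ 2 [ZMOD 4] := by
  classical
  set B := gramMatrix b with hBdef
  have hsym : ∀ i j, B i j = B j i := by
    intro i j
    show (Algebra.leftMulMatrix b (b i * b j)).trace = (Algebra.leftMulMatrix b (b j * b i)).trace
    rw [_root_.map_mul, _root_.map_mul, Matrix.trace_mul_comm]
  have h00 : B 0 0 = (n : ℤ) := by
    show (Algebra.leftMulMatrix b (b 0 * b 0)).trace = (n : ℤ)
    rw [hb, one_mul, _root_.map_one, Matrix.trace_one, Fintype.card_fin]
  have hdiag : ∀ i, (2:ℤ) ∣ B i i - B 0 i := by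
    intro i
    have h1 : B i i = ((Algebra.leftMulMatrix b (b i)) * (Algebra.leftMulMatrix b (b i))).trace := by
      show (Algebra.leftMulMatrix b (b i * b i)).trace = _
      rw [_root_.map_mul]
    have h2 : B 0 i = (Algebra.leftMulMatrix b (b i)).trace := by
      show (Algebra.leftMulMatrix b (b 0 * b i)).trace = _
      rw [hb, one_mul]
    rw [h1, h2]
    exact trace_sq_mod2 _
  -- ZMod 4 data
  set D4 := B.map (fun x : ℤ => (x : ZMod 4)) with hD4
  set C := D4.submatrix (fun x : {a : Fin n // ¬ a = 0} => x.1)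
    (fun x : {a : Fin n // ¬ a = 0} => x.1) with hC
  set r : {a : Fin n // ¬ a = 0} → ZMod 4 := fun (x : {a : Fin n // ¬ a = 0}) => D4 0 x.1 with hr
  have hstep3 : D4.submatrix (zeroEquiv n) (zeroEquiv n)
      = Matrix.fromBlocks (Matrix.of fun _ _ => D4 0 0) (Matrix.replicateRow Unit r)
          (Matrix.replicateCol Unit r) C := by
    rw [hC, hr]
    ext i j
    rcases i with u | x <;> rcases j with v | y
    · rfl
    · rfl
    · show D4 x.1 0 = D4 0 x.1
      rw [hD4]
      show ((B x.1 0 : ℤ) : ZMod 4) = ((B 0 x.1 : ℤ) : ZMod 4)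
      rw [hsym x.1 0]
    · rfl
  have hsymC : Cᵀ = C := by
    rw [hC, hD4]
    ext i j
    simp only [Matrix.transpose_apply, Matrix.submatrix_apply, Matrix.map_apply]
    rw [hsym]
  have hrC : ∀ x, E4 (r x - C x x) := by
    intro x
    simp only [hr, hC, hD4, Matrix.submatrix_apply, Matrix.map_apply]
    rw [← Int.cast_sub]
    exact E4.intCast (dvd_sub_comm.mp (hdiag x.1))
  have hmainL := main_L (Fintype.card {a : Fin n // ¬ a = 0}) {a : Fin n // ¬ a = 0} rfl
    C hsymC r hrC
  have hcardι : Fintype.card {a : Fin n // ¬ a = 0} = n - 1 := by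
    have h1 := Fintype.card_subtype_compl (fun a : Fin n => a = 0)
    rw [Fintype.card_subtype_eq, Fintype.card_fin] at h1
    exact h1
  have hn1 : ((Fintype.card {a : Fin n // ¬ a = 0} : ℕ) : ZMod 4) + 1 = ((n : ℕ) : ZMod 4) := by
    rw [hcardι]
    have hnn : n - 1 + 1 = n := Nat.succ_pred_eq_of_pos (Nat.pos_of_ne_zero (NeZero.ne n))
    rw [show ((n : ℕ) : ZMod 4) = ((n - 1 + 1 : ℕ) : ZMod 4) from by rw [hnn],
      Nat.cast_add, Nat.cast_one]
  have hD400 : D4 0 0 = ((n : ℕ) : ZMod 4) := by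
    rw [hD4]
    show ((B 0 0 : ℤ) : ZMod 4) = _
    rw [h00]
    push_cast
    rfl
  have hdet4 : ((B.det : ℤ) : ZMod 4) = C.det ^ 2 := by
    have e1 : ((B.det : ℤ) : ZMod 4) = D4.det := by
      rw [hD4]
      show (Int.castRingHom (ZMod 4)) B.det = _
      rw [RingHom.map_det]
      rfl
    rw [e1, ← Matrix.det_submatrix_equiv_self (zeroEquiv n) D4, hstep3, det_border_top,
      hmainL, hn1, hD400]
    ring
  -- mod 2 part
  set minor := B.submatrix (fun x : {a : Fin n // ¬ a = 0} => x.1)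
    (fun x : {a : Fin n // ¬ a = 0} => x.1) with hminor
  have hmod2 : dpf n B ≡ minor.det [ZMOD 2] :=
    (ZMod.intCast_eq_intCast_iff _ _ _).mp (dpf_mod2 B hsym hdiag)
  have hsq : (dpf n B) ^ 2 ≡ minor.det ^ 2 [ZMOD 4] := sq_modEq hmod2
  have hCint : ((minor.det : ℤ) : ZMod 4) = C.det := by
    rw [hminor, hC, hD4]
    show (Int.castRingHom (ZMod 4)) _ = _
    rw [RingHom.map_det]
    rfl
  refine (ZMod.intCast_eq_intCast_iff _ _ _).mp ?_
  show ((B.det : ℤ) : ZMod 4) = (((dpf n B) ^ 2 : ℤ) : ZMod 4)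
  rw [hdet4, ← hCint]
  rw [show (((dpf n B) ^ 2 : ℤ) : ZMod 4) = ((minor.det ^ 2 : ℤ) : ZMod 4) from
    (ZMod.intCast_eq_intCast_iff _ _ _).mpr hsq]
  push_cast
  ring
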